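/- arXiv:1803.10672 — 2 statements merged into one kernel-verified Lean document; each statement's English description precedes it below -/
import Mathlib

section
/- Let n be an outer normal to P at q and let W ⊆ V be any subset with n ∈ W. Then sup { t ∈ [0,1] : for all w ∈ W, F_b(t,w) ≥ 0 } = ‖q‖ / ‖q − b‖. -/
open RealInnerProductSpace

/-- Part (1) of Corollary 3.2 of the paper.  Let `P` be a convex polytope in a
finite-dimensional real inner product space whose interior contains the origin,
`b ∈ interior P` with `b ≠ 0`, `M w = max_{x ∈ P} ⟪x, w⟫`, and
`F_b(t, w) = t * ⟪b, w⟫ + (1 - t) * M w`.  Let `q` be the unique frontier point of `P`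
on the ray `{λ • (-b) : λ > 0}` and let `n ≠ 0` be an outer normal to `P` at `q`.
Then for any `W ⊆ V` containing `n`:
`sup {t ∈ [0,1] : ∀ w ∈ W, F_b(t, w) ≥ 0} = ‖q‖ / ‖q - b‖`. -/
theorem sup_t_eq_ratio_q
    {V : Type*} [NormedAddCommGroup V] [InnerProductSpace ℝ V] [FiniteDimensional ℝ V]
    (S : Finset V) (P : Set V) (hP : P = convexHull ℝ (S : Set V))
    (h0 : (0 : V) ∈ interior P)
    (b : V) (hb : b ∈ interior P) (hb0 : b ≠ 0)
    (M : V → ℝ) (hM : ∀ w : V, IsGreatest ((fun x => ⟪x, w⟫) '' P) (M w))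
    (q : V) (hq : q ∈ frontier P) (hqray : ∃ μ : ℝ, 0 < μ ∧ q = μ • (-b))
    (n : V) (hn : n ≠ 0) (hqn : ⟪q, n⟫ = M n)
    (W : Set V) (hnW : n ∈ W) :
    sSup {t : ℝ | t ∈ Set.Icc (0 : ℝ) 1 ∧ ∀ w ∈ W, 0 ≤ t * ⟪b, w⟫ + (1 - t) * M w}
      = ‖q‖ / ‖q - b‖ := by
  obtain ⟨μ, hμ, hqe⟩ := hqray
  have hμ1 : (0:ℝ) < μ + 1 := by linarith
  have hPclosed : IsClosed P := by
    rw [hP]; exact (S.finite_toSet.isCompact_convexHull (𝕜 := ℝ)).isClosed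
  have hqP : q ∈ P := by
    have := hq.1
    rwa [hPclosed.closure_eq] at this
  have h0P : (0:V) ∈ P := interior_subset h0
  have hbP : b ∈ P := interior_subset hb
  have hMub : ∀ w : V, ∀ x ∈ P, ⟪x, w⟫ ≤ M w := fun w x hx => (hM w).2 ⟨x, hx, rfl⟩
  have hqinner : ∀ w : V, ⟪q, w⟫ = -(μ * ⟪b, w⟫) := by
    intro w
    rw [hqe, real_inner_smul_left, inner_neg_left]
    ring
  -- key inequality from q ∈ P
  have hkey : ∀ w : V, -(μ * ⟪b, w⟫) ≤ M w := by
    intro w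
    have := hMub w q hqP
    rwa [hqinner w] at this
  -- b interior gives strict inequality for n
  have hbn : ⟪b, n⟫ < M n := by
    obtain ⟨ε, hε, hball⟩ := Metric.isOpen_iff.mp isOpen_interior b hb
    have hn' : (0:ℝ) < ‖n‖ := norm_pos_iff.mpr hn
    set δ : ℝ := ε / (2 * ‖n‖) with hδ
    have hδpos : 0 < δ := by positivity
    have hmem : b + δ • n ∈ P := by
      apply interior_subset
      apply hball
      rw [Metric.mem_ball, dist_eq_norm]
      have : b + δ • n - b = δ • n := by abel
      have hδn : δ * ‖n‖ = ε / 2 := by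
        rw [hδ]; field_simp
      rw [this, norm_smul, Real.norm_eq_abs, abs_of_pos hδpos, hδn]
      linarith
    have h2 := hMub n _ hmem
    rw [inner_add_left, real_inner_smul_left, real_inner_self_eq_norm_sq] at h2
    nlinarith [mul_pos hδpos (pow_pos hn' 2)]
  have hc : ⟪b, n⟫ < 0 := by
    have h1 : -(μ * ⟪b, n⟫) = M n := by rw [← hqinner n, hqn]
    nlinarith
  -- the RHS equals μ/(μ+1)
  have hbnorm : (0:ℝ) < ‖b‖ := norm_pos_iff.mpr hb0
  have hqnorm : ‖q‖ = μ * ‖b‖ := by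
    rw [hqe, norm_smul, norm_neg, Real.norm_eq_abs, abs_of_pos hμ]
  have hqbe : q - b = -((μ + 1) • b) := by
    rw [hqe]; module
  have hqbnorm : ‖q - b‖ = (μ + 1) * ‖b‖ := by
    rw [hqbe, norm_neg, norm_smul, Real.norm_eq_abs, abs_of_pos hμ1]
  have hrhs : ‖q‖ / ‖q - b‖ = μ / (μ + 1) := by
    rw [hqnorm, hqbnorm]
    rw [mul_div_mul_right _ _ (ne_of_gt hbnorm)]
  rw [hrhs]
  -- the set is [0, μ/(μ+1)] with greatest element μ/(μ+1)
  apply IsGreatest.csSup_eq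
  constructor
  · constructor
    · constructor
      · positivity
      · rw [div_le_one hμ1]; linarith
    · intro w hw
      have h1 : -(μ * ⟪b, w⟫) ≤ M w := hkey w
      have heq : μ / (μ + 1) * ⟪b, w⟫ + (1 - μ / (μ + 1)) * M w
          = (μ * ⟪b, w⟫ + M w) / (μ + 1) := by
        field_simp
        ring
      rw [heq]
      apply div_nonneg _ hμ1.le
      linarith
  · rintro t ⟨⟨ht0, ht1⟩, hall⟩
    have h1 := hall n hnW
    have h2 : -(μ * ⟪b, n⟫) = M n := by rw [← hqinner n, hqn]
    rw [← h2] at h1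
    rw [le_div_iff₀ hμ1]
    nlinarith
end

section
/- Fix u ∈ V, u ≠ 0, and let H := { w ∈ V : ⟨u,w⟩ ≥ 0 }. Let π : V → V denote the orthogonal projection onto the hyperplane u^⊥, and assume π(b) ≠ 0. Suppose there exists an outer normal n to P at q with ⟨u,n⟩ < 0 (i.e. n ∉ H). Let q̃ denote the unique point of the frontier of π(P), taken inside the hyperplane u^⊥, lying on the ray {λ·(−π(b)) : λ > 0}. Then sup { t ∈ [0,1] : for all w ∈ H, F_b(t,w) ≥ 0 } = ‖q̃‖ / ‖q̃ − π(b)‖. -/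
open RealInnerProductSpace

set_option maxHeartbeats 1600000 in
/-- Part (2) of Corollary 3.2 of the paper.  Let `P` be a convex polytope in a
finite-dimensional real inner product space whose interior contains the origin,
`b ∈ interior P` with `b ≠ 0`, `M w = max_{x ∈ P} ⟪x, w⟫`, and
`F_b(t, w) = t * ⟪b, w⟫ + (1 - t) * M w`.  Let `q` be the unique frontier point of `P`
on the ray `{λ • (-b) : λ > 0}`.  Fix `u ≠ 0`, let `H = {w : ⟪u, w⟫ ≥ 0}` and let `π`
be the orthogonal projection onto the hyperplane `u^⊥`; assume `π b ≠ 0`.  Suppose there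
is an outer normal `n` to `P` at `q` with `⟪u, n⟫ < 0`.  Let `q̃` be the unique point of
the frontier (inside `u^⊥`) of `π '' P` lying on the ray `{λ • (-(π b)) : λ > 0}`.  Then
`sup {t ∈ [0,1] : ∀ w ∈ H, F_b(t, w) ≥ 0} = ‖q̃‖ / ‖q̃ - π b‖`. -/
theorem sup_t_eq_ratio_projected
    {V : Type*} [NormedAddCommGroup V] [InnerProductSpace ℝ V] [FiniteDimensional ℝ V]
    (S : Finset V) (P : Set V) (hP : P = convexHull ℝ (S : Set V))
    (h0 : (0 : V) ∈ interior P)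
    (b : V) (hb : b ∈ interior P) (hb0 : b ≠ 0)
    (M : V → ℝ) (hM : ∀ w : V, IsGreatest ((fun x => ⟪x, w⟫) '' P) (M w))
    (q : V) (hq : q ∈ frontier P) (hqray : ∃ μ : ℝ, 0 < μ ∧ q = μ • (-b))
    (u : V) (hu : u ≠ 0)
    (K : Submodule ℝ V) (hK : K = (Submodule.span ℝ {u})ᗮ)
    (hπb : (K.orthogonalProjectionOnto b : V) ≠ 0)
    (hn : ∃ n : V, n ≠ 0 ∧ ⟪q, n⟫ = M n ∧ ⟪u, n⟫ < 0)
    (qt : K)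
    (hqt : qt ∈ frontier ((fun x : V => K.orthogonalProjectionOnto x) '' P))
    (hqtray : ∃ μ : ℝ, 0 < μ ∧ qt = μ • (-(K.orthogonalProjectionOnto b))) :
    sSup {t : ℝ | t ∈ Set.Icc (0 : ℝ) 1 ∧
        ∀ w : V, 0 ≤ ⟪u, w⟫ → 0 ≤ t * ⟪b, w⟫ + (1 - t) * M w}
      = ‖qt‖ / ‖(qt : V) - (K.orthogonalProjectionOnto b : V)‖ := by
  obtain ⟨μ, hμ, hqt_eq⟩ := hqtray
  obtain ⟨ν, hν, hq_eq⟩ := hqray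
  obtain ⟨n, hn0, hnq, hnu⟩ := hn
  -- basic facts about P
  have hPcomp : IsCompact P := hP ▸ S.finite_toSet.isCompact_convexHull ℝ
  have hPclosed : IsClosed P := hPcomp.isClosed
  have hPconv : Convex ℝ P := hP ▸ convex_convexHull ℝ _
  have h0P : (0 : V) ∈ P := interior_subset h0
  have hqP : q ∈ P := hPclosed.frontier_subset hq
  -- the projection
  set pj : V →L[ℝ] K := K.orthogonalProjectionOnto with hpj
  have hpj_surj : Function.Surjective pj := fun y => ⟨(y : V), by
    simpa [hpj] using K.orthogonalProjectionOnto_mem_subspace_eq_self y⟩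
  have hpj_inner : ∀ (x : V) (m : K), ⟪x, (m : V)⟫ = ⟪pj x, m⟫ := by
    intro x m
    have h1 : ⟪x - (pj x : V), (m : V)⟫ = 0 :=
      K.starProjection_inner_eq_zero x (m : V) m.2
    have h2 : ⟪x, (m : V)⟫ - ⟪(pj x : V), (m : V)⟫ = 0 := by
      rw [← inner_sub_left]; exact h1
    rw [Submodule.coe_inner]; linarith
  set C : Set K := (fun x : V => K.orthogonalProjectionOnto x) '' P with hC
  have hCconv : Convex ℝ C := hPconv.linear_image (pj : V →ₗ[ℝ] K)
  have hCcomp : IsCompact C := hPcomp.image pj.continuous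
  have hCclosed : IsClosed C := hCcomp.isClosed
  have h0C : (0 : K) ∈ interior C := by
    have hopen : IsOpenMap pj := pj.isOpenMap hpj_surj
    have : pj '' interior P ⊆ C := Set.image_mono interior_subset
    have h0' : (0 : K) ∈ pj '' interior P := ⟨0, h0, by simp [hpj]⟩
    exact interior_maximal this (hopen _ isOpen_interior) h0'
  have hqtC : qt ∈ C := hCclosed.closure_subset (frontier_subset_closure hqt)
  have hqt_not_int : qt ∉ interior C := hqt.2
  -- membership in K means orthogonal to u
  have hK_inner : ∀ m : K, ⟪u, (m : V)⟫ = 0 := by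
    intro m
    have hmem : (m : V) ∈ (Submodule.span ℝ {u})ᗮ := by rw [← hK]; exact m.2
    exact (Submodule.mem_orthogonal _ _).1 hmem u (Submodule.mem_span_singleton_self u)
  -- M basics
  have hM_ub : ∀ (w x : V), x ∈ P → ⟪x, w⟫ ≤ M w := fun w x hx => (hM w).2 ⟨x, hx, rfl⟩
  have hM0 : ∀ w : V, 0 ≤ M w := fun w => by
    simpa using hM_ub w 0 h0P
  -- M n > 0
  have hMn_pos : 0 < M n := by
    obtain ⟨ε, hε, hball⟩ := Metric.isOpen_iff.1 isOpen_interior 0 h0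
    have hx : (ε / (2 * ‖n‖)) • n ∈ P := by
      apply interior_subset; apply hball
      rw [Metric.mem_ball, dist_zero_right, norm_smul]
      have hn' : 0 < ‖n‖ := norm_pos_iff.2 hn0
      rw [Real.norm_eq_abs, abs_of_pos (by positivity)]
      have hhalf : ε / (2 * ‖n‖) * ‖n‖ = ε / 2 := by
        field_simp
      rw [hhalf]
      linarith
    have := hM_ub n _ hx
    rw [real_inner_smul_left, real_inner_self_eq_norm_sq] at this
    have hn' : 0 < ‖n‖ := norm_pos_iff.2 hn0
    have : 0 < (ε / (2 * ‖n‖)) * ‖n‖ ^ 2 := by positivity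
    linarith [hM_ub n _ hx, (by rw [real_inner_smul_left, real_inner_self_eq_norm_sq] :
      ⟪(ε / (2 * ‖n‖)) • n, n⟫ = (ε / (2 * ‖n‖)) * ‖n‖ ^ 2)]
  -- ⟪b, n⟫ < 0
  have hbn : ⟪b, n⟫ < 0 := by
    have : M n = -ν * ⟪b, n⟫ := by
      rw [← hnq, hq_eq, real_inner_smul_left, inner_neg_left]; ring
    nlinarith
  -- ν ≤ μ
  have hνμ : ν ≤ μ := by
    by_contra hlt
    push_neg at hlt
    have hqC' : (-ν : ℝ) • pj b ∈ C := by
      refine ⟨q, hqP, ?_⟩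
      rw [hq_eq]
      simp [hpj, map_smul, map_neg, neg_smul, smul_neg]
    have hcombo := hCconv.combo_interior_self_mem_interior h0C hqC'
      (a := 1 - μ / ν) (b := μ / ν)
      (by have : μ / ν < 1 := (div_lt_one hν).2 hlt; linarith)
      (by positivity) (by ring)
    have : qt = (1 - μ / ν) • (0 : K) + (μ / ν) • ((-ν : ℝ) • pj b) := by
      rw [hqt_eq, smul_zero, zero_add, smul_smul, smul_neg, ← neg_smul]
      congr 1
      field_simp
    rw [← this] at hcombo
    exact hqt_not_int hcombo
  -- the fiber point p over qt
  obtain ⟨p, hpP, hpq0⟩ := hqtC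
  have hpq : pj p = qt := hpq0
  have hpdecomp : ∃ c : ℝ, p = c • u - μ • b := by
    have hmem : p + μ • b ∈ Kᗮ := by
      have h1 : pj (p + μ • b) = 0 := by
        rw [map_add, map_smul, hpq, hqt_eq]
        simp
      have h2 : p + μ • b - (pj (p + μ • b) : V) ∈ Kᗮ := K.sub_starProjection_mem_orthogonal _
      rwa [h1, ZeroMemClass.coe_zero, sub_zero] at h2
    rw [hK, Submodule.orthogonal_orthogonal] at hmem
    obtain ⟨c, hc⟩ := Submodule.mem_span_singleton.1 hmem
    exact ⟨c, by rw [eq_sub_iff_add_eq]; exact hc.symm⟩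
  obtain ⟨c, hc⟩ := hpdecomp
  -- c ≥ 0
  have hun : ⟪u, n⟫ < 0 := hnu
  have hc0 : 0 ≤ c := by
    have h1 : ⟪p, n⟫ ≤ M n := hM_ub n p hpP
    have h2 : M n = -ν * ⟪b, n⟫ := by
      rw [← hnq, hq_eq, real_inner_smul_left, inner_neg_left]; ring
    have h3 : ⟪p, n⟫ = c * ⟪u, n⟫ - μ * ⟪b, n⟫ := by
      rw [hc, inner_sub_left, real_inner_smul_left, real_inner_smul_left]
    have h4 : c * ⟪u, n⟫ ≤ (μ - ν) * ⟪b, n⟫ := by linarith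
    by_contra hcneg
    push_neg at hcneg
    have h5 : 0 < c * ⟪u, n⟫ := mul_pos_of_neg_of_neg hcneg hun
    have h6 : (μ - ν) * ⟪b, n⟫ ≤ 0 :=
      mul_nonpos_iff.2 (Or.inl ⟨sub_nonneg.2 hνμ, hbn.le⟩)
    linarith
  -- t* ∈ T
  set t₀ : ℝ := μ / (μ + 1) with ht₀
  set T : Set ℝ := {t : ℝ | t ∈ Set.Icc (0 : ℝ) 1 ∧
      ∀ w : V, 0 ≤ ⟪u, w⟫ → 0 ≤ t * ⟪b, w⟫ + (1 - t) * M w} with hT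
  have ht₀mem : t₀ ∈ T := by
    constructor
    · constructor
      · positivity
      · rw [ht₀, div_le_one (by linarith)]; linarith
    · intro w hw
      have hMw : -μ * ⟪b, w⟫ ≤ M w := by
        have := hM_ub w p hpP
        have hpw : ⟪p, w⟫ = c * ⟪u, w⟫ - μ * ⟪b, w⟫ := by
          rw [hc, inner_sub_left, real_inner_smul_left, real_inner_smul_left]
        nlinarith
      have h1t : 1 - t₀ = 1 / (μ + 1) := by
        rw [ht₀]; field_simp; ring
      rw [h1t, ht₀]
      have hμ1 : (0:ℝ) < μ + 1 := by linarith
      rw [div_mul_eq_mul_div, div_mul_eq_mul_div, ← add_div]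
      apply div_nonneg _ hμ1.le
      nlinarith
  -- construct the outer normal m to C at qt
  obtain ⟨f, hf⟩ := geometric_hahn_banach_open_point (hCconv.interior) isOpen_interior hqt_not_int
  have hfqt_pos : f 0 < f qt := hf 0 h0C
  have hf_ub : ∀ x ∈ C, f x ≤ f qt := by
    intro x hx
    by_contra hlt
    push_neg at hlt
    have hfx : 0 < f x := by
      have : f 0 = 0 := map_zero f
      linarith
    have hb' : f qt / f x ∈ Set.Ioo (0:ℝ) 1 := by
      constructor
      · have : 0 < f qt := by have : f 0 = 0 := map_zero f; linarith
        positivity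
      · rw [div_lt_one hfx]; exact hlt
    have hcombo := hCconv.combo_interior_self_mem_interior h0C hx
      (a := 1 - f qt / f x) (b := f qt / f x) (by linarith [hb'.2]) (le_of_lt hb'.1) (by ring)
    rw [smul_zero, zero_add] at hcombo
    have := hf _ hcombo
    rw [map_smul, smul_eq_mul, div_mul_cancel₀ _ hfx.ne'] at this
    exact lt_irrefl _ this
  set m : K := (InnerProductSpace.toDual ℝ K).symm f with hm
  have hm_apply : ∀ y : K, ⟪m, y⟫ = f y := fun y => InnerProductSpace.toDual_symm_apply
  have hA_pos : 0 < ⟪m, qt⟫ := by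
    rw [hm_apply]
    have : f 0 = 0 := map_zero f
    linarith
  -- inner products with m
  have hbm : ⟪b, (m : V)⟫ = ⟪pj b, m⟫ := hpj_inner b m
  have hbm_eq : ⟪pj b, m⟫ = -(⟪m, qt⟫ / μ) := by
    have h1 : ⟪m, qt⟫ = -μ * ⟪pj b, m⟫ := by
      rw [real_inner_comm, hqt_eq, real_inner_smul_left, inner_neg_left]; ring
    rw [h1]
    field_simp
  have hbm_neg : ⟪b, (m : V)⟫ < 0 := by
    rw [hbm, hbm_eq]
    have h2 : 0 < ⟪m, qt⟫ / μ := div_pos hA_pos hμ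
    linarith
  -- M (↑m) = ⟪m, qt⟫ (in appropriate form)
  have hMm : M (m : V) = ⟪m, qt⟫ := by
    refine ((hM (m : V)).unique ⟨⟨p, hpP, ?_⟩, ?_⟩)
    · show ⟪p, (m : V)⟫ = ⟪m, qt⟫
      rw [hpj_inner p m, hpq, real_inner_comm]
    · rintro r ⟨x, hx, rfl⟩
      show ⟪x, (m : V)⟫ ≤ ⟪m, qt⟫
      rw [hpj_inner x m, real_inner_comm, hm_apply, hm_apply]
      exact hf_ub _ ⟨x, hx, rfl⟩
  -- t₀ is an upper bound of T
  have hub : ∀ t ∈ T, t ≤ t₀ := by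
    rintro t ⟨⟨ht0, ht1⟩, hall⟩
    have := hall (m : V) (le_of_eq (hK_inner m).symm)
    rw [hMm] at this
    rw [hbm] at this
    rw [hbm_eq] at this
    -- 0 ≤ t * (-(A/μ)) + (1-t) * A  with A > 0, μ > 0
    set A : ℝ := ⟪m, qt⟫ with hA
    rw [ht₀, le_div_iff₀ (by linarith : (0:ℝ) < μ + 1)]
    have hμ' : 0 < μ := hμ
    have h' : 0 ≤ (-(t * A) + (1 - t) * A * μ) / μ := by
      calc (0:ℝ) ≤ t * -(A / μ) + (1 - t) * A := this
        _ = (-(t * A) + (1 - t) * A * μ) / μ := by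
              field_simp
    have h'' : 0 ≤ -(t * A) + (1 - t) * A * μ := by
      by_contra hneg
      push_neg at hneg
      have : (-(t * A) + (1 - t) * A * μ) / μ < 0 := div_neg_of_neg_of_pos hneg hμ'
      linarith
    nlinarith [hA_pos]
  have hsup : sSup T = t₀ := IsGreatest.csSup_eq ⟨ht₀mem, hub⟩
  rw [hsup]
  -- final norm computation
  have hnorm1 : ‖qt‖ = μ * ‖(K.orthogonalProjectionOnto b : V)‖ := by
    rw [hqt_eq, norm_smul, Real.norm_eq_abs, abs_of_pos hμ, norm_neg]
    congr 1
  have hnorm2 : ‖(qt : V) - (K.orthogonalProjectionOnto b : V)‖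
      = (μ + 1) * ‖(K.orthogonalProjectionOnto b : V)‖ := by
    have : (qt : V) = μ • (-(K.orthogonalProjectionOnto b : V)) := by
      rw [hqt_eq]; simp; rfl
    rw [this]
    have : μ • (-(K.orthogonalProjectionOnto b : V)) - (K.orthogonalProjectionOnto b : V)
        = (-(μ + 1)) • (K.orthogonalProjectionOnto b : V) := by
      rw [smul_neg, neg_smul]
      module
    rw [this, norm_smul, Real.norm_eq_abs, abs_neg, abs_of_pos (by linarith)]
  rw [hnorm1, hnorm2, ht₀]
  have hnb : 0 < ‖(K.orthogonalProjectionOnto b : V)‖ := norm_pos_iff.2 hπb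
  rw [mul_div_mul_right _ _ hnb.ne']
end
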